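/- Let x, y, z be points in a metric space and x̃, ỹ, z̃ points in ℝⁿ such that each of the three pairwise distances agrees up to factor (1 ± δ): |1 − ‖x̃ − ỹ‖/d(x,y)| ≤ δ, and similarly for the other two pairs, with δ ≤ 1/4 and all three pairwise distances positive and comparable: each pairwise distance lies in [D, 2D] for some D > 0. Then the comparison angle ∠̃ x y z (computed from d via the Euclidean law of cosines) and the Euclidean angle at ỹ of the triangle (x̃, ỹ, z̃) differ by at most C·√δ for a universal constant C. -/

import Mathlib

open InnerProductGeometry
open scoped RealInnerProductSpace

private lemma cos_gap {t₁ t₂ : ℝ} (h0 : 0 ≤ t₁) (h12 : t₁ ≤ t₂) (h2 : t₂ ≤ Real.pi) :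
    (t₂ - t₁) ^ 2 ≤ Real.pi ^ 2 * (Real.cos t₁ - Real.cos t₂) := by
  have hπ := Real.pi_pos
  set s := (t₂ - t₁) / 2 with hs_def
  set m := (t₁ + t₂) / 2 with hm_def
  have hs0 : 0 ≤ s := by simp [hs_def]; linarith
  have hs : s ≤ Real.pi / 2 := by simp [hs_def]; linarith
  have hsm : s ≤ m := by simp [hs_def, hm_def]; linarith
  have hm : m ≤ Real.pi - s := by simp [hs_def, hm_def]; linarith
  have hdiff : Real.cos t₁ - Real.cos t₂ = 2 * Real.sin m * Real.sin s := by
    rw [Real.cos_sub_cos]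
    have h1 : (t₁ + t₂) / 2 = m := rfl
    have h2' : (t₁ - t₂) / 2 = -s := by rw [hs_def]; ring
    rw [h1, h2', Real.sin_neg]; ring
  have hss : 2 / Real.pi * s ≤ Real.sin s := Real.mul_le_sin hs0 hs
  have h2s : (0:ℝ) ≤ 2 / Real.pi * s := by positivity
  have hsins0 : 0 ≤ Real.sin s := le_trans h2s hss
  have hsin_m : Real.sin s ≤ Real.sin m := by
    rcases le_or_gt m (Real.pi / 2) with h | h
    · exact Real.sin_le_sin_of_le_of_le_pi_div_two (by linarith) h hsm
    · rw [← Real.sin_pi_sub m]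
      exact Real.sin_le_sin_of_le_of_le_pi_div_two (by linarith) (by linarith) (by linarith)
  have hpe : Real.pi ^ 2 * (2 / Real.pi * s) ^ 2 = 4 * s ^ 2 := by
    field_simp; ring
  have h1 : (2 / Real.pi * s) ^ 2 ≤ Real.sin s * Real.sin m := by
    calc (2 / Real.pi * s) ^ 2 ≤ Real.sin s ^ 2 := by
          apply sq_le_sq' (by linarith) hss
    _ = Real.sin s * Real.sin s := by ring
    _ ≤ Real.sin s * Real.sin m := mul_le_mul_of_nonneg_left hsin_m hsins0
  have hts : t₂ - t₁ = 2 * s := by rw [hs_def]; ring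
  rw [hdiff, hts]
  nlinarith [sq_nonneg Real.pi, h1, hpe]

private lemma arccos_holder (p q : ℝ) (hp1 : -1 ≤ p) (hp2 : p ≤ 1) (hq1 : -1 ≤ q)
    (hq2 : q ≤ 1) :
    |Real.arccos p - Real.arccos q| ≤ Real.pi * Real.sqrt |p - q| := by
  have key : ∀ p q : ℝ, -1 ≤ p → p ≤ 1 → -1 ≤ q → q ≤ 1 → q ≤ p →
      |Real.arccos p - Real.arccos q| ≤ Real.pi * Real.sqrt |p - q| := by
    intro p q hp1 hp2 hq1 hq2 hqp
    have harc : Real.arccos p ≤ Real.arccos q :=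
      Real.strictAntiOn_arccos.antitoneOn ⟨hq1, hq2⟩ ⟨hp1, hp2⟩ hqp
    have h0 : 0 ≤ Real.arccos p := Real.arccos_nonneg p
    have h2 : Real.arccos q ≤ Real.pi := Real.arccos_le_pi q
    have hcos1 : Real.cos (Real.arccos p) = p := Real.cos_arccos hp1 hp2
    have hcos2 : Real.cos (Real.arccos q) = q := Real.cos_arccos hq1 hq2
    have hgap := cos_gap h0 harc h2
    rw [hcos1, hcos2] at hgap
    have hsq := Real.sqrt_le_sqrt hgap
    rw [Real.sqrt_sq_eq_abs] at hsq
    have : Real.sqrt (Real.pi ^ 2 * (p - q)) = Real.pi * Real.sqrt (p - q) := by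
      rw [Real.sqrt_mul (sq_nonneg _), Real.sqrt_sq Real.pi_pos.le]
    rw [this] at hsq
    rw [abs_sub_comm]
    rwa [abs_of_nonneg (by linarith : (0:ℝ) ≤ p - q)]
  rcases le_total q p with h | h
  · exact key p q hp1 hp2 hq1 hq2 h
  · rw [abs_sub_comm, abs_sub_comm p q]
    exact key q p hq1 hq2 hp1 hp2 h

private lemma mul_bounds {δ u v : ℝ} (hv : 0 < v) (hδ0 : 0 ≤ δ) (h : |1 - u / v| ≤ δ) :
    (1 - δ) * v ≤ u ∧ u ≤ (1 + δ) * v := by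
  rw [abs_le] at h
  have huv : u / v * v = u := div_mul_cancel₀ u hv.ne'
  have h1 : 1 - δ ≤ u / v := by linarith [h.2]
  have h2 : u / v ≤ 1 + δ := by linarith [h.1]
  constructor
  · calc (1 - δ) * v ≤ u / v * v := mul_le_mul_of_nonneg_right h1 hv.le
    _ = u := huv
  · calc u = u / v * v := huv.symm
    _ ≤ (1 + δ) * v := mul_le_mul_of_nonneg_right h2 hv.le

private lemma P_range {a b c : ℝ} (ha : 0 < a) (hb : 0 < b) (h1 : c ≤ a + b)
    (h2 : a ≤ c + b) (h3 : b ≤ a + c) :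
    -1 ≤ (a ^ 2 + b ^ 2 - c ^ 2) / (2 * a * b) ∧
      (a ^ 2 + b ^ 2 - c ^ 2) / (2 * a * b) ≤ 1 := by
  have hc : 0 ≤ c := by linarith
  constructor
  · rw [neg_le, ← neg_div, div_le_one (by positivity)]
    nlinarith [mul_nonneg (by linarith : (0:ℝ) ≤ a + b - c)
      (by linarith : (0:ℝ) ≤ a + b + c)]
  · rw [div_le_one (by positivity)]
    nlinarith [mul_nonneg (by linarith : (0:ℝ) ≤ c - a + b)
      (by linarith : (0:ℝ) ≤ c + a - b)]

set_option maxHeartbeats 1000000 in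
private lemma quot_bound {δ D a b c a' b' c' : ℝ} (hD : 0 < D) (hδ0 : 0 ≤ δ) (hδ4 : δ ≤ 1/4)
    (ha1 : D ≤ a) (ha2 : a ≤ 2 * D) (hb1 : D ≤ b) (hb2 : b ≤ 2 * D)
    (hc1 : D ≤ c) (hc2 : c ≤ 2 * D)
    (hA1 : (1 - δ) * a ≤ a') (hA2 : a' ≤ (1 + δ) * a)
    (hB1 : (1 - δ) * b ≤ b') (hB2 : b' ≤ (1 + δ) * b)
    (hC1 : (1 - δ) * c ≤ c') (hC2 : c' ≤ (1 + δ) * c) :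
    |(a ^ 2 + b ^ 2 - c ^ 2) / (2 * a * b)
      - (a' ^ 2 + b' ^ 2 - c' ^ 2) / (2 * a' * b')| ≤ 118 * δ := by
  have ha : 0 < a := lt_of_lt_of_le hD ha1
  have hb : 0 < b := lt_of_lt_of_le hD hb1
  have hc : 0 < c := lt_of_lt_of_le hD hc1
  have ma1 : δ * a ≤ δ * (2 * D) := mul_le_mul_of_nonneg_left ha2 hδ0
  have mb1 : δ * b ≤ δ * (2 * D) := mul_le_mul_of_nonneg_left hb2 hδ0
  have mc1 : δ * c ≤ δ * (2 * D) := mul_le_mul_of_nonneg_left hc2 hδ0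
  have m2 : δ * (2 * D) ≤ (1/4) * (2 * D) :=
    mul_le_mul_of_nonneg_right hδ4 (by positivity)
  have ma3 : δ * a ≤ (1/4) * a := mul_le_mul_of_nonneg_right hδ4 ha.le
  have mb3 : δ * b ≤ (1/4) * b := mul_le_mul_of_nonneg_right hδ4 hb.le
  have mc3 : δ * c ≤ (1/4) * c := mul_le_mul_of_nonneg_right hδ4 hc.le
  have ha' : (3/4) * D ≤ a' := by linarith
  have hb' : (3/4) * D ≤ b' := by linarith
  have hc' : (3/4) * D ≤ c' := by linarith
  have ha'2 : a' ≤ (5/2) * D := by linarith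
  have hb'2 : b' ≤ (5/2) * D := by linarith
  have hc'2 : c' ≤ (5/2) * D := by linarith
  have ha'0 : 0 < a' := lt_of_lt_of_le (by positivity) ha'
  have hb'0 : 0 < b' := lt_of_lt_of_le (by positivity) hb'
  have hc'0 : 0 < c' := lt_of_lt_of_le (by positivity) hc'
  have hda : |a' - a| ≤ 2 * δ * D := by
    rw [abs_le]; constructor <;> linarith
  have hdb : |b' - b| ≤ 2 * δ * D := by
    rw [abs_le]; constructor <;> linarith
  have hdc : |c' - c| ≤ 2 * δ * D := by
    rw [abs_le]; constructor <;> linarith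
  have hsplit : (a ^ 2 + b ^ 2 - c ^ 2) / (2 * a * b)
        - (a' ^ 2 + b' ^ 2 - c' ^ 2) / (2 * a' * b')
      = ((a ^ 2 + b ^ 2 - c ^ 2) - (a' ^ 2 + b' ^ 2 - c' ^ 2)) / (2 * a * b)
      + (a' ^ 2 + b' ^ 2 - c' ^ 2) * ((a' * b' - a * b) / ((2 * a * b) * (a' * b'))) := by
    field_simp
    ring
  have sqdiff : ∀ u v : ℝ, 0 < u → u ≤ 2 * D → 0 < v → v ≤ (5/2) * D →
      |v - u| ≤ 2 * δ * D → |u ^ 2 - v ^ 2| ≤ 9 * δ * D ^ 2 := by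
    intro u v hu hu2 hv hv2 hd
    have : |u ^ 2 - v ^ 2| = |v - u| * (u + v) := by
      rw [← abs_of_nonneg (by positivity : (0:ℝ) ≤ u + v), ← abs_mul]
      rw [abs_sub_comm]
      congr 1; ring
    rw [this]
    calc |v - u| * (u + v) ≤ (2 * δ * D) * ((9/2) * D) :=
          mul_le_mul hd (by linarith) (by positivity) (by positivity)
    _ = 9 * δ * D ^ 2 := by ring
  have hnumd : |(a ^ 2 + b ^ 2 - c ^ 2) - (a' ^ 2 + b' ^ 2 - c' ^ 2)| ≤ 27 * δ * D ^ 2 := by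
    have e1 := sqdiff a a' ha ha2 ha'0 ha'2 hda
    have e2 := sqdiff b b' hb hb2 hb'0 hb'2 hdb
    have e3 := sqdiff c c' hc hc2 hc'0 hc'2 hdc
    calc |(a ^ 2 + b ^ 2 - c ^ 2) - (a' ^ 2 + b' ^ 2 - c' ^ 2)|
        = |(a ^ 2 - a' ^ 2) + (b ^ 2 - b' ^ 2) + -(c ^ 2 - c' ^ 2)| := by ring_nf
    _ ≤ |(a ^ 2 - a' ^ 2) + (b ^ 2 - b' ^ 2)| + |-(c ^ 2 - c' ^ 2)| := abs_add_le _ _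
    _ ≤ |a ^ 2 - a' ^ 2| + |b ^ 2 - b' ^ 2| + |c ^ 2 - c' ^ 2| := by
          rw [abs_neg]; exact add_le_add (abs_add_le _ _) le_rfl
    _ ≤ 27 * δ * D ^ 2 := by linarith
  have hprod : |a' * b' - a * b| ≤ 9 * δ * D ^ 2 := by
    have e : a' * b' - a * b = b' * (a' - a) + a * (b' - b) := by ring
    rw [e]
    calc |b' * (a' - a) + a * (b' - b)| ≤ |b' * (a' - a)| + |a * (b' - b)| := abs_add_le _ _
    _ = b' * |a' - a| + a * |b' - b| := by
          rw [abs_mul, abs_mul, abs_of_nonneg hb'0.le, abs_of_nonneg ha.le]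
    _ ≤ (5/2 * D) * (2 * δ * D) + (2 * D) * (2 * δ * D) := by
          apply add_le_add
          · exact mul_le_mul hb'2 hda (abs_nonneg _) (by positivity)
          · exact mul_le_mul ha2 hdb (abs_nonneg _) (by positivity)
    _ = 9 * δ * D ^ 2 := by ring
  have hnumabs : |a' ^ 2 + b' ^ 2 - c' ^ 2| ≤ 13 * D ^ 2 := by
    have sa : a' ^ 2 ≤ (5/2 * D) ^ 2 := pow_le_pow_left₀ ha'0.le ha'2 2
    have sb : b' ^ 2 ≤ (5/2 * D) ^ 2 := pow_le_pow_left₀ hb'0.le hb'2 2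
    have sc : c' ^ 2 ≤ (5/2 * D) ^ 2 := pow_le_pow_left₀ hc'0.le hc'2 2
    rw [abs_le]
    constructor <;>
      linarith [sa, sb, sc, sq_nonneg a', sq_nonneg b', sq_nonneg c']
  rw [hsplit]
  have hDD : D * D ≤ a * b := mul_le_mul ha1 hb1 hD.le (le_trans hD.le ha1)
  have hT1 : |((a ^ 2 + b ^ 2 - c ^ 2) - (a' ^ 2 + b' ^ 2 - c' ^ 2)) / (2 * a * b)|
      ≤ 27 * δ / 2 := by
    rw [abs_div, abs_of_nonneg (by positivity : (0:ℝ) ≤ 2 * a * b),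
      div_le_iff₀ (by positivity)]
    calc |(a ^ 2 + b ^ 2 - c ^ 2) - (a' ^ 2 + b' ^ 2 - c' ^ 2)| ≤ 27 * δ * D ^ 2 := hnumd
    _ ≤ 27 * δ / 2 * (2 * a * b) := by
          have := mul_le_mul_of_nonneg_left hDD hδ0
          linarith
  have hT2 : |(a' ^ 2 + b' ^ 2 - c' ^ 2) * ((a' * b' - a * b) / ((2 * a * b) * (a' * b')))|
      ≤ 104 * δ := by
    rw [abs_mul, abs_div,
      abs_of_nonneg (by positivity : (0:ℝ) ≤ (2 * a * b) * (a' * b'))]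
    rw [← mul_div_assoc, div_le_iff₀ (by positivity)]
    calc |a' ^ 2 + b' ^ 2 - c' ^ 2| * |a' * b' - a * b|
        ≤ (13 * D ^ 2) * (9 * δ * D ^ 2) :=
          mul_le_mul hnumabs hprod (abs_nonneg _) (by positivity)
    _ = 117 * δ * D ^ 4 := by ring
    _ ≤ 104 * δ * ((2 * a * b) * (a' * b')) := by
          have hDD' : (3/4 * D) * (3/4 * D) ≤ a' * b' :=
            mul_le_mul ha' hb' (by positivity) ha'0.le
          have h4 : ((9:ℝ)/8) * (D ^ 2 * D ^ 2) ≤ (2 * a * b) * (a' * b') := by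
            have := mul_le_mul hDD hDD' (by positivity) (by positivity : (0:ℝ) ≤ a * b)
            linarith
          have := mul_le_mul_of_nonneg_left h4 hδ0
          linarith
  calc |_ + _| ≤ _ + _ := abs_add_le _ _
  _ ≤ 27 * δ / 2 + 104 * δ := add_le_add hT1 hT2
  _ ≤ 118 * δ := by linarith

set_option maxHeartbeats 1000000 in
theorem stmt17 : ∃ C : ℝ, 0 < C ∧ ∀ (X : Type*) [MetricSpace X] (n : ℕ)
    (x y z : X) (xt yt zt : EuclideanSpace ℝ (Fin n)) (δ D : ℝ),
    0 < D → 0 ≤ δ → δ ≤ 1/4 →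
    D ≤ dist x y → dist x y ≤ 2 * D →
    D ≤ dist y z → dist y z ≤ 2 * D →
    D ≤ dist x z → dist x z ≤ 2 * D →
    |1 - ‖xt - yt‖ / dist x y| ≤ δ →
    |1 - ‖yt - zt‖ / dist y z| ≤ δ →
    |1 - ‖xt - zt‖ / dist x z| ≤ δ →
    |Real.arccos ((dist x y ^ 2 + dist y z ^ 2 - dist x z ^ 2)
        / (2 * dist x y * dist y z))
      - angle (xt - yt) (zt - yt)| ≤ C * Real.sqrt δ := by
  refine ⟨100, by norm_num, ?_⟩
  intro X _ n x y z xt yt zt δ D hD hδ0 hδ4 ha1 ha2 hb1 hb2 hc1 hc2 hA hB hC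
  set a := dist x y with ha_def
  set b := dist y z with hb_def
  set c := dist x z with hc_def
  set a' := ‖xt - yt‖ with ha'_def
  set b' := ‖yt - zt‖ with hb'_def
  set c' := ‖xt - zt‖ with hc'_def
  have ha : 0 < a := lt_of_lt_of_le hD ha1
  have hb : 0 < b := lt_of_lt_of_le hD hb1
  have hc : 0 < c := lt_of_lt_of_le hD hc1
  obtain ⟨hA1, hA2⟩ := mul_bounds ha hδ0 hA
  obtain ⟨hB1, hB2⟩ := mul_bounds hb hδ0 hB
  obtain ⟨hC1, hC2⟩ := mul_bounds hc hδ0 hC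
  have ha'0 : 0 < a' :=
    lt_of_lt_of_le (mul_pos (by linarith : (0:ℝ) < 1 - δ) ha) hA1
  have hb'0 : 0 < b' :=
    lt_of_lt_of_le (mul_pos (by linarith : (0:ℝ) < 1 - δ) hb) hB1
  -- rewrite the angle as arccos of a quotient
  have hangle : angle (xt - yt) (zt - yt)
      = Real.arccos ((a' ^ 2 + b' ^ 2 - c' ^ 2) / (2 * a' * b')) := by
    unfold InnerProductGeometry.angle
    congr 1
    have hb'r : ‖zt - yt‖ = b' := by rw [hb'_def, norm_sub_rev]
    have hsub : (xt - yt) - (zt - yt) = xt - zt := by abel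
    have hn := norm_sub_sq_real (xt - yt) (zt - yt)
    have hinner : ⟪xt - yt, zt - yt⟫
        = (‖xt - yt‖ ^ 2 + ‖zt - yt‖ ^ 2 - ‖(xt - yt) - (zt - yt)‖ ^ 2) / 2 := by
      linarith [hn]
    rw [hinner, hsub, hb'r, ← ha'_def, ← hc'_def]
    ring
  rw [hangle]
  -- triangle inequalities
  have htri1 : c ≤ a + b := dist_triangle x y z
  have htri2 : a ≤ c + b := by
    have := dist_triangle x z y
    rw [dist_comm z y] at this
    exact this
  have htri3 : b ≤ a + c := by
    have := dist_triangle y x z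
    rw [dist_comm y x] at this
    exact this
  have htri1' : c' ≤ a' + b' := by
    calc c' = ‖(xt - yt) + (yt - zt)‖ := by rw [hc'_def]; congr 1; abel
    _ ≤ a' + b' := norm_add_le _ _
  have htri2' : a' ≤ c' + b' := by
    calc a' = ‖(xt - zt) + (zt - yt)‖ := by rw [ha'_def]; congr 1; abel
    _ ≤ c' + ‖zt - yt‖ := norm_add_le _ _
    _ = c' + b' := by rw [norm_sub_rev]
  have htri3' : b' ≤ a' + c' := by
    calc b' = ‖(yt - xt) + (xt - zt)‖ := by rw [hb'_def]; congr 1; abel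
    _ ≤ ‖yt - xt‖ + c' := norm_add_le _ _
    _ = a' + c' := by rw [norm_sub_rev]
  obtain ⟨hP1, hP2⟩ := P_range ha hb htri1 htri2 htri3
  obtain ⟨hP'1, hP'2⟩ := P_range ha'0 hb'0 htri1' htri2' htri3'
  have hQP := quot_bound hD hδ0 hδ4 ha1 ha2 hb1 hb2 hc1 hc2 hA1 hA2 hB1 hB2 hC1 hC2
  have hmain := arccos_holder _ _ hP1 hP2 hP'1 hP'2
  calc |Real.arccos ((a ^ 2 + b ^ 2 - c ^ 2) / (2 * a * b))
      - Real.arccos ((a' ^ 2 + b' ^ 2 - c' ^ 2) / (2 * a' * b'))|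
      ≤ Real.pi * Real.sqrt |(a ^ 2 + b ^ 2 - c ^ 2) / (2 * a * b)
        - (a' ^ 2 + b' ^ 2 - c' ^ 2) / (2 * a' * b')| := hmain
  _ ≤ Real.pi * Real.sqrt (118 * δ) :=
      mul_le_mul_of_nonneg_left (Real.sqrt_le_sqrt hQP) Real.pi_pos.le
  _ = Real.pi * (Real.sqrt 118 * Real.sqrt δ) := by rw [Real.sqrt_mul (by norm_num)]
  _ ≤ 4 * (11 * Real.sqrt δ) := by
      apply mul_le_mul Real.pi_le_four
      · apply mul_le_mul_of_nonneg_right _ (Real.sqrt_nonneg _)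
        calc Real.sqrt 118 ≤ Real.sqrt 121 := Real.sqrt_le_sqrt (by norm_num)
        _ = 11 := by
            rw [show (121:ℝ) = 11 ^ 2 by norm_num, Real.sqrt_sq (by norm_num)]
      · positivity
      · norm_num
  _ ≤ 100 * Real.sqrt δ := by linarith [Real.sqrt_nonneg δ]
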